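/- arXiv:1501.03669 — 4 statements merged into one kernel-verified Lean document; each statement's English description precedes it below -/
import Mathlib

section
/- (Proposition 1.) Let K ≥ 1, λ > 0, and r ∈ ℝ^K, and define h : ℝ^K → ℝ by h(y) = max_{1≤k≤K} (y^(k) + r^(k)). Then for every y ∈ ℝ^K, the proximity operator of λh satisfies prox_{λh}(y) = y − P_{S_λ}(y + r), where P_{S_λ} is the Euclidean projection onto the scaled simplex S_λ = {u ∈ ℝ^K : u^(k) ≥ 0 for all k, ∑_{k=1}^K u^(k) = λ}. -/
/-- Proposition 1: For `K ≥ 1`, `λ > 0`, `r ∈ ℝ^K` and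
`h(y) = max_k (y k + r k)`, one has `prox_{λh}(y) = y − P_{S_λ}(y + r)`, where
`P_{S_λ}` is the Euclidean projection onto the scaled simplex
`S_λ = {v : ∀ k, v k ≥ 0, ∑ k, v k = λ}`.  The projection `p = P_{S_λ}(y+r)` is
described by membership in `S_λ` together with minimality of the squared Euclidean
distance, and `prox_{λh}(y) = y - p` is expressed by saying that `y - p` is the
unique minimizer of `v ↦ (1/2)‖v − y‖² + λ h(v)`. -/
theorem prox_of_scaled_max_via_simplex_projection
    (K : ℕ) (hK : 1 ≤ K) (lam : ℝ) (hlam : 0 < lam)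
    (r y p : Fin K → ℝ)
    (hpS : (∀ k, 0 ≤ p k) ∧ ∑ k, p k = lam)
    (hpmin : ∀ q : Fin K → ℝ, ((∀ k, 0 ≤ q k) ∧ ∑ k, q k = lam) →
        ∑ k, ((y k + r k) - p k) ^ 2 ≤ ∑ k, ((y k + r k) - q k) ^ 2) :
    (∀ v : Fin K → ℝ,
        (1 / 2) * ∑ k, ((y - p) k - y k) ^ 2 + lam * (⨆ k, ((y - p) k + r k)) ≤
        (1 / 2) * ∑ k, (v k - y k) ^ 2 + lam * (⨆ k, (v k + r k))) ∧
    (∀ v : Fin K → ℝ,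
        (∀ w : Fin K → ℝ,
          (1 / 2) * ∑ k, (v k - y k) ^ 2 + lam * (⨆ k, (v k + r k)) ≤
          (1 / 2) * ∑ k, (w k - y k) ^ 2 + lam * (⨆ k, (w k + r k))) → v = y - p) := by
  haveI : Nonempty (Fin K) := ⟨⟨0, hK⟩⟩
  obtain ⟨hp0, hpsum⟩ := hpS
  have bdd : ∀ f : Fin K → ℝ, BddAbove (Set.range f) :=
    fun f => (Set.finite_range f).bddAbove
  set z : Fin K → ℝ := fun k => y k + r k with hz
  -- Variational inequality at the vertices of the simplex
  have VI : ∀ j, lam * (z j - p j) ≤ ∑ k, p k * (z k - p k) := by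
    intro j
    set A : ℝ := lam * (z j - p j) - ∑ k, p k * (z k - p k) with hA
    set q : Fin K → ℝ := fun k => if k = j then lam else 0 with hq
    have hqsum : ∑ k, q k = lam := by simp [hq]
    have hqz : ∑ k, (z k - p k) * q k = lam * (z j - p j) := by
      rw [Finset.sum_eq_single j]
      · simp [hq, mul_comm]
      · intro b _ hb; simp [hq, hb]
      · simp
    set B : ℝ := ∑ k, (q k - p k) ^ 2 with hBdef
    have hAval : ∑ k, (z k - p k) * (q k - p k) = A := by
      have hterm : ∀ k ∈ Finset.univ,
          (z k - p k) * (q k - p k) = (z k - p k) * q k - p k * (z k - p k) :=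
        fun k _ => by ring
      rw [Finset.sum_congr rfl hterm, Finset.sum_sub_distrib, hqz, hA]
    -- for every t ∈ (0,1], 2*t*A ≤ t^2*B
    have hstep : ∀ t : ℝ, 0 < t → t ≤ 1 → 2 * t * A ≤ t ^ 2 * B := by
      intro t ht0 ht1
      have hqt0 : ∀ k, 0 ≤ p k + t * (q k - p k) := by
        intro k
        have he : p k + t * (q k - p k) = (1 - t) * p k + t * q k := by ring
        rw [he]
        have hqk : 0 ≤ q k := by
          by_cases h : k = j <;> simp [hq, h, le_of_lt hlam]
        have h1t : 0 ≤ 1 - t := by linarith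
        exact add_nonneg (mul_nonneg h1t (hp0 k)) (mul_nonneg ht0.le hqk)
      have hqtsum : ∑ k, (p k + t * (q k - p k)) = lam := by
        rw [Finset.sum_add_distrib, ← Finset.mul_sum, Finset.sum_sub_distrib,
          hqsum, hpsum]
        ring
      have hmin := hpmin (fun k => p k + t * (q k - p k)) ⟨hqt0, hqtsum⟩
      have hexp : ∑ k, (z k - (p k + t * (q k - p k))) ^ 2 =
          ∑ k, (z k - p k) ^ 2 - 2 * t * (∑ k, (z k - p k) * (q k - p k))
            + t ^ 2 * B := by
        have hterm : ∀ k ∈ Finset.univ,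
            (z k - (p k + t * (q k - p k))) ^ 2 =
            (z k - p k) ^ 2 - 2 * t * ((z k - p k) * (q k - p k))
              + t ^ 2 * (q k - p k) ^ 2 := fun k _ => by ring
        rw [Finset.sum_congr rfl hterm, Finset.sum_add_distrib,
          Finset.sum_sub_distrib, ← Finset.mul_sum, ← Finset.mul_sum, hBdef]
      rw [hexp, hAval] at hmin
      linarith
    -- conclude A ≤ 0
    by_contra hcon
    push_neg at hcon
    have hApos : 0 < A := by rw [hA]; linarith
    have hB0 : 0 ≤ B := Finset.sum_nonneg fun k _ => sq_nonneg _
    rcases eq_or_lt_of_le hB0 with hB | hB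
    · have := hstep 1 one_pos le_rfl
      nlinarith
    · have ht0 : 0 < min 1 (A / B) := lt_min one_pos (div_pos hApos hB)
      have ht1 : min 1 (A / B) ≤ 1 := min_le_left _ _
      have h2 := hstep _ ht0 ht1
      have htB : min 1 (A / B) * B ≤ A := by
        calc min 1 (A / B) * B ≤ (A / B) * B :=
              mul_le_mul_of_nonneg_right (min_le_right _ _) hB.le
          _ = A := div_mul_cancel₀ A (ne_of_gt hB)
      nlinarith [sq_nonneg (min 1 (A / B))]
  -- lam * sup (z - p) = ∑ p (z - p)
  have hsup_le : (⨆ k, (z k - p k)) ≤ (∑ k, p k * (z k - p k)) / lam := by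
    refine ciSup_le fun j => ?_
    rw [le_div_iff₀ hlam, mul_comm]
    exact VI j
  have hle_sup : ∀ v : Fin K → ℝ,
      ∑ k, p k * (v k + r k) ≤ lam * (⨆ k, (v k + r k)) := by
    intro v
    calc ∑ k, p k * (v k + r k)
        ≤ ∑ k, p k * (⨆ k, (v k + r k)) := by
          refine Finset.sum_le_sum fun k _ => ?_
          exact mul_le_mul_of_nonneg_left
            (le_ciSup (bdd fun k => v k + r k) k) (hp0 k)
      _ = lam * (⨆ k, (v k + r k)) := by
          rw [← Finset.sum_mul, hpsum]
  have hEq : lam * (⨆ k, (z k - p k)) = ∑ k, p k * (z k - p k) := by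
    refine le_antisymm ?_ ?_
    · calc lam * (⨆ k, (z k - p k))
          ≤ lam * ((∑ k, p k * (z k - p k)) / lam) :=
            mul_le_mul_of_nonneg_left hsup_le (le_of_lt hlam)
        _ = ∑ k, p k * (z k - p k) := by field_simp
    · have := hle_sup (fun k => y k - p k)
      have he : (⨆ k, (y k - p k + r k)) = ⨆ k, (z k - p k) := by
        congr 1; funext k; simp only [hz]; ring
      have he2 : ∀ k ∈ Finset.univ,
          p k * (y k - p k + r k) = p k * (z k - p k) := fun k _ => by
        simp only [hz]; ring
      rw [he, Finset.sum_congr rfl he2] at this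
      exact this
  -- key inequality: F(v) ≥ F(y-p) + (1/2)‖v-(y-p)‖²
  have key : ∀ v : Fin K → ℝ,
      (1 / 2) * ∑ k, (p k) ^ 2 + ∑ k, p k * (z k - p k)
        + (1 / 2) * ∑ k, (v k - y k + p k) ^ 2
      ≤ (1 / 2) * ∑ k, (v k - y k) ^ 2 + lam * (⨆ k, (v k + r k)) := by
    intro v
    have h1 := hle_sup v
    have h2 : ∑ k, ((1 / 2) * (v k - y k) ^ 2 + p k * (v k + r k)) =
        ∑ k, ((1 / 2) * (p k) ^ 2 + p k * (z k - p k)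
          + (1 / 2) * (v k - y k + p k) ^ 2) :=
      Finset.sum_congr rfl fun k _ => by simp only [hz]; ring
    rw [Finset.sum_add_distrib, Finset.sum_add_distrib, Finset.sum_add_distrib,
      ← Finset.mul_sum, ← Finset.mul_sum, ← Finset.mul_sum] at h2
    linarith
  -- value at y - p
  have hval : (1 / 2) * ∑ k, ((y - p) k - y k) ^ 2
      + lam * (⨆ k, ((y - p) k + r k))
      = (1 / 2) * ∑ k, (p k) ^ 2 + ∑ k, p k * (z k - p k) := by
    have e1 : ∑ k, ((y - p) k - y k) ^ 2 = ∑ k, (p k) ^ 2 :=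
      Finset.sum_congr rfl fun k _ => by simp only [Pi.sub_apply]; ring
    have e2 : (⨆ k, ((y - p) k + r k)) = ⨆ k, (z k - p k) := by
      congr 1; funext k; simp only [Pi.sub_apply, hz]; ring
    rw [e1, e2, hEq]
  constructor
  · intro v
    have hk := key v
    have hnn : 0 ≤ ∑ k, (v k - y k + p k) ^ 2 :=
      Finset.sum_nonneg fun k _ => sq_nonneg _
    rw [hval]
    linarith
  · intro v hv
    have h1 := hv (y - p)
    have h2 := key v
    rw [hval] at h1
    have hnn : ∑ k, (v k - y k + p k) ^ 2 ≤ 0 := by linarith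
    funext k
    have hk : (v k - y k + p k) ^ 2 = 0 := by
      have := Finset.sum_nonneg (fun k (_ : k ∈ Finset.univ) =>
        sq_nonneg (v k - y k + p k))
      have hle : (v k - y k + p k) ^ 2 ≤ ∑ k, (v k - y k + p k) ^ 2 :=
        Finset.single_le_sum (f := fun i => (v i - y i + p i) ^ 2)
          (fun i _ => sq_nonneg _) (Finset.mem_univ k)
      nlinarith
    have := pow_eq_zero_iff (n := 2) (by norm_num) |>.mp hk
    simp only [Pi.sub_apply]
    linarith
end

section
/- (Proposition 2.) Let K ≥ 1, r ∈ ℝ^K, and define h : ℝ^K → ℝ by h(y) = max_{1≤k≤K} (y^(k) + r^(k)). Fix (y, ζ) ∈ ℝ^K × ℝ and let (ν^(1),…,ν^(K)) be the nondecreasing rearrangement of the values (y^(k) + r^(k))_{1≤k≤K}. Then the Euclidean projection of (y, ζ) onto epi h = {(p, θ) : h(p) ≤ θ} equals (p, θ), where θ is determined as follows: there exists a unique integer k̄ ∈ {1,…,K+1} such that θ := (ζ + ∑_{k=k̄}^{K} ν^(k)) / (K − k̄ + 2) satisfies ν^(k̄−1) < θ ≤ ν^(k̄) (with the conventions that the condition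 ν^(k̄−1) < θ is vacuous when k̄ = 1, the condition θ ≤ ν^(k̄) is vacuous when k̄ = K+1, and the sum ∑_{k=K+1}^{K} is empty); and p^(k) = min{y^(k), θ − r^(k)} for every k ∈ {1,…,K}. -/
open Finset

private lemma sandwich_sum (K : ℕ) (ν : ℕ → ℝ)
    (hmono : ∀ i j, 1 ≤ i → i ≤ j → j ≤ K → ν i ≤ ν j)
    (kbar : ℕ) (θ : ℝ) (h1 : 1 ≤ kbar) (h2 : kbar ≤ K + 1)
    (hlo : 2 ≤ kbar → ν (kbar - 1) < θ) (hhi : kbar ≤ K → θ ≤ ν kbar) :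
    ∑ k ∈ Icc 1 K, max (ν k - θ) 0 = ∑ k ∈ Icc kbar K, (ν k - θ) := by
  have hsplit : Icc 1 K = Icc 1 (kbar - 1) ∪ Icc kbar K := by
    ext x; simp only [mem_union, mem_Icc]; omega
  have hdisj : Disjoint (Icc 1 (kbar - 1)) (Icc kbar K) := by
    rw [Finset.disjoint_left]; intro x hx hx'
    simp only [mem_Icc] at hx hx'; omega
  rw [hsplit, Finset.sum_union hdisj]
  have h0 : ∑ k ∈ Icc 1 (kbar - 1), max (ν k - θ) 0 = 0 := by
    apply Finset.sum_eq_zero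
    intro k hk
    simp only [mem_Icc] at hk
    have hk2 : 2 ≤ kbar := by omega
    have hle : ν k ≤ ν (kbar - 1) := hmono k (kbar - 1) hk.1 hk.2 (by omega)
    have := hlo hk2
    exact max_eq_right (by linarith)
  rw [h0, zero_add]
  refine Finset.sum_congr rfl fun k hk => ?_
  simp only [mem_Icc] at hk
  have : θ ≤ ν k := le_trans (hhi (by omega)) (hmono kbar k h1 hk.1 hk.2)
  exact max_eq_left (by linarith)

private lemma root_char (K : ℕ) (ν : ℕ → ℝ) (ζ : ℝ)
    (hmono : ∀ i j, 1 ≤ i → i ≤ j → j ≤ K → ν i ≤ ν j)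
    (kbar : ℕ) (θ : ℝ) (h1 : 1 ≤ kbar) (h2 : kbar ≤ K + 1)
    (hlo : 2 ≤ kbar → ν (kbar - 1) < θ) (hhi : kbar ≤ K → θ ≤ ν kbar) :
    θ = (ζ + ∑ k ∈ Icc kbar K, ν k) / ((K + 2 - kbar : ℕ) : ℝ) ↔
      θ - ζ = ∑ k ∈ Icc 1 K, max (ν k - θ) 0 := by
  have hsw := sandwich_sum K ν hmono kbar θ h1 h2 hlo hhi
  have hcard : (Icc kbar K).card = K + 1 - kbar := Nat.card_Icc kbar K
  have hsum : ∑ k ∈ Icc kbar K, (ν k - θ)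
      = (∑ k ∈ Icc kbar K, ν k) - ((K + 1 - kbar : ℕ) : ℝ) * θ := by
    rw [Finset.sum_sub_distrib, Finset.sum_const, hcard, nsmul_eq_mul]
  have hd : ((K + 2 - kbar : ℕ) : ℝ) = ((K + 1 - kbar : ℕ) : ℝ) + 1 := by
    have h : (K + 2 - kbar : ℕ) = (K + 1 - kbar) + 1 := by omega
    rw [h]; push_cast; ring
  have hpos : (0 : ℝ) < ((K + 2 - kbar : ℕ) : ℝ) := by
    have h : 1 ≤ K + 2 - kbar := by omega
    exact_mod_cast Nat.lt_of_lt_of_le Nat.zero_lt_one h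
  rw [hsw, eq_div_iff (ne_of_gt hpos), hd, hsum]
  constructor <;> intro h <;> nlinarith [h]

private lemma root_unique (K : ℕ) (ν : ℕ → ℝ) (ζ : ℝ) {θ1 θ2 : ℝ}
    (h1 : θ1 - ζ = ∑ k ∈ Icc 1 K, max (ν k - θ1) 0)
    (h2 : θ2 - ζ = ∑ k ∈ Icc 1 K, max (ν k - θ2) 0) : θ1 = θ2 := by
  have anti : ∀ a b : ℝ, a ≤ b →
      ∑ k ∈ Icc 1 K, max (ν k - b) 0 ≤ ∑ k ∈ Icc 1 K, max (ν k - a) 0 :=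
    fun a b h => Finset.sum_le_sum fun k _ => max_le_max (by linarith) le_rfl
  rcases le_total θ1 θ2 with h | h
  · have := anti θ1 θ2 h; linarith
  · have := anti θ2 θ1 h; linarith

private lemma index_unique (K : ℕ) (ν : ℕ → ℝ) (θ : ℝ)
    (hmono : ∀ i j, 1 ≤ i → i ≤ j → j ≤ K → ν i ≤ ν j)
    (a b : ℕ) (ha1 : 1 ≤ a) (ha2 : a ≤ K + 1) (hb1 : 1 ≤ b) (hb2 : b ≤ K + 1)
    (halo : 2 ≤ a → ν (a - 1) < θ) (hahi : a ≤ K → θ ≤ ν a)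
    (hblo : 2 ≤ b → ν (b - 1) < θ) (hbhi : b ≤ K → θ ≤ ν b) : a = b := by
  rcases Nat.lt_trichotomy a b with h | h | h
  · have h1 := hahi (by omega)
    have h2 := hblo (by omega)
    have h3 := hmono a (b - 1) ha1 (by omega) (by omega)
    linarith
  · exact h
  · have h1 := hbhi (by omega)
    have h2 := halo (by omega)
    have h3 := hmono b (a - 1) hb1 (by omega) (by omega)
    linarith

private lemma root_exists (K : ℕ) (hK : 1 ≤ K) (ν : ℕ → ℝ) (ζ : ℝ)
    (hmono : ∀ i j, 1 ≤ i → i ≤ j → j ≤ K → ν i ≤ ν j) :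
    ∃ θ : ℝ, θ - ζ = ∑ k ∈ Icc 1 K, max (ν k - θ) 0 := by
  set f : ℝ → ℝ := fun θ => θ - ζ - ∑ k ∈ Icc 1 K, max (ν k - θ) 0 with hf
  have hcont : Continuous f := by
    apply Continuous.sub (continuous_id.sub continuous_const)
    apply continuous_finset_sum
    intro k _
    exact (continuous_const.sub continuous_id).max continuous_const
  set b := max ζ (ν K) with hb
  have hab : ζ ≤ b := le_max_left _ _
  have hfa : f ζ ≤ 0 := by
    have : 0 ≤ ∑ k ∈ Icc 1 K, max (ν k - ζ) 0 :=
      Finset.sum_nonneg fun k _ => le_max_right _ _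
    simp only [hf]; linarith
  have hSb : ∑ k ∈ Icc 1 K, max (ν k - b) 0 = 0 := by
    apply Finset.sum_eq_zero
    intro k hk
    simp only [mem_Icc] at hk
    have h1 : ν k ≤ ν K := hmono k K hk.1 hk.2 le_rfl
    have h2 : ν K ≤ b := le_max_right _ _
    exact max_eq_right (by linarith)
  have hfb : 0 ≤ f b := by simp only [hf, hSb]; linarith
  have := intermediate_value_Icc hab hcont.continuousOn
  obtain ⟨θ, _, hθ⟩ := this ⟨hfa, hfb⟩
  refine ⟨θ, ?_⟩
  simp only [hf] at hθ
  linarith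

private lemma kbar_exists (K : ℕ) (hK : 1 ≤ K) (ν : ℕ → ℝ) (θ : ℝ)
    (hmono : ∀ i j, 1 ≤ i → i ≤ j → j ≤ K → ν i ≤ ν j) :
    ∃ kb : ℕ, (1 ≤ kb ∧ kb ≤ K + 1) ∧ (2 ≤ kb → ν (kb - 1) < θ) ∧ (kb ≤ K → θ ≤ ν kb) := by
  by_cases hA : ((Finset.Icc 1 K).filter (fun k => θ ≤ ν k)).Nonempty
  · set m := Finset.min' _ hA with hm
    have hmem := Finset.min'_mem _ hA
    rw [Finset.mem_filter, mem_Icc] at hmem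
    refine ⟨m, ⟨hmem.1.1, by omega⟩, ?_, fun _ => hmem.2⟩
    intro h2
    by_contra hcon
    push_neg at hcon
    have hmem' : m - 1 ∈ (Finset.Icc 1 K).filter (fun k => θ ≤ ν k) := by
      rw [Finset.mem_filter, mem_Icc]
      exact ⟨⟨by omega, by omega⟩, hcon⟩
    have := Finset.min'_le _ _ hmem'
    omega
  · refine ⟨K + 1, ⟨by omega, le_rfl⟩, ?_, by omega⟩
    intro _
    have hKm : K + 1 - 1 = K := by omega
    rw [hKm]
    by_contra hcon
    push_neg at hcon
    exact hA ⟨K, by rw [Finset.mem_filter, mem_Icc]; exact ⟨⟨hK, le_rfl⟩, hcon⟩⟩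

private lemma perm_sum (K : ℕ) (r y : Fin K → ℝ) (θ : ℝ)
    (σ : Equiv.Perm (Fin K)) (ν : ℕ → ℝ)
    (hσ : ∀ k : Fin K, ν (k.1 + 1) = y (σ k) + r (σ k)) :
    ∑ k : Fin K, max (y k + r k - θ) 0 = ∑ k ∈ Icc 1 K, max (ν k - θ) 0 := by
  have h1 : ∑ k : Fin K, max (y k + r k - θ) 0
      = ∑ k : Fin K, max (y (σ k) + r (σ k) - θ) 0 :=
    (Equiv.sum_comp σ (fun j => max (y j + r j - θ) 0)).symm
  have h2 : ∑ k : Fin K, max (y (σ k) + r (σ k) - θ) 0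
      = ∑ k : Fin K, max (ν (k.1 + 1) - θ) 0 := by
    refine Finset.sum_congr rfl fun k _ => by rw [hσ k]
  have h3 : ∑ k : Fin K, max (ν (k.1 + 1) - θ) 0
      = ∑ i ∈ Finset.range K, max (ν (i + 1) - θ) 0 :=
    Fin.sum_univ_eq_sum_range (fun i => max (ν (i + 1) - θ) 0) K
  have h4 : ∑ k ∈ Icc 1 K, max (ν k - θ) 0
      = ∑ i ∈ Finset.range K, max (ν (i + 1) - θ) 0 := by
    rw [← Finset.Ico_add_one_right_eq_Icc, Finset.sum_Ico_eq_sum_range]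
    have hKK : K + 1 - 1 = K := by omega
    rw [hKK]
    exact Finset.sum_congr rfl fun i _ => by rw [Nat.add_comm 1 i]
  rw [h1, h2, h3, h4]

private lemma optimality (K : ℕ) (hK : 1 ≤ K) (r y : Fin K → ℝ) (ζ θ : ℝ)
    (σ : Equiv.Perm (Fin K)) (ν : ℕ → ℝ)
    (hσ : ∀ k : Fin K, ν (k.1 + 1) = y (σ k) + r (σ k))
    (hroot : θ - ζ = ∑ k ∈ Icc 1 K, max (ν k - θ) 0) :
    (⨆ k : Fin K, (min (y k) (θ - r k) + r k)) ≤ θ ∧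
    ∀ (q : Fin K → ℝ) (τ : ℝ), (⨆ k, (q k + r k)) ≤ τ →
      (∑ k, (min (y k) (θ - r k) - y k) ^ 2) + (θ - ζ) ^ 2 ≤
      (∑ k, (q k - y k) ^ 2) + (τ - ζ) ^ 2 := by
  haveI : Nonempty (Fin K) := ⟨⟨0, hK⟩⟩
  set p : Fin K → ℝ := fun k => min (y k) (θ - r k) with hp
  have key : ∑ k : Fin K, (y k - p k) = θ - ζ := by
    have hpt : ∀ k : Fin K, y k - p k = max (y k + r k - θ) 0 := by
      intro k
      rcases le_total (y k) (θ - r k) with h | h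
      · simp only [hp, min_eq_left h]
        rw [max_eq_right (by linarith)]; ring
      · simp only [hp, min_eq_right h]
        rw [max_eq_left (by linarith)]; ring
    calc ∑ k : Fin K, (y k - p k) = ∑ k : Fin K, max (y k + r k - θ) 0 :=
          Finset.sum_congr rfl fun k _ => hpt k
      _ = ∑ k ∈ Icc 1 K, max (ν k - θ) 0 := perm_sum K r y θ σ ν hσ
      _ = θ - ζ := hroot.symm
  constructor
  · apply ciSup_le
    intro k
    have : p k ≤ θ - r k := min_le_right _ _
    linarith
  · intro q τ hqt
    have hq : ∀ k, q k + r k ≤ τ := fun k =>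
      le_trans (le_ciSup (f := fun k => q k + r k) (Finite.bddAbove_range _) k) hqt
    have hterm : ∀ k, (y k - p k) * (q k - p k) ≤ (y k - p k) * (τ - θ) := by
      intro k
      rcases le_total (y k) (θ - r k) with h | h
      · have hpk : p k = y k := min_eq_left h
        rw [hpk]; simp
      · have hpk : p k = θ - r k := min_eq_right h
        have h1 : 0 ≤ y k - p k := by rw [hpk]; linarith
        have h2 : q k - p k ≤ τ - θ := by rw [hpk]; have := hq k; linarith
        exact mul_le_mul_of_nonneg_left h2 h1
    have hsum : ∑ k, (y k - p k) * (q k - p k) ≤ (θ - ζ) * (τ - θ) := by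
      calc ∑ k, (y k - p k) * (q k - p k)
          ≤ ∑ k, (y k - p k) * (τ - θ) := Finset.sum_le_sum fun k _ => hterm k
        _ = (∑ k, (y k - p k)) * (τ - θ) := by rw [← Finset.sum_mul]
        _ = (θ - ζ) * (τ - θ) := by rw [key]
    have hexp : ∑ k, (q k - y k) ^ 2
        = (∑ k, (p k - y k) ^ 2) + (∑ k, (q k - p k) ^ 2)
          - 2 * ∑ k, (y k - p k) * (q k - p k) := by
      rw [← Finset.sum_add_distrib, Finset.mul_sum, ← Finset.sum_sub_distrib]
      exact Finset.sum_congr rfl fun k _ => by ring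
    have hsq : (0 : ℝ) ≤ ∑ k, (q k - p k) ^ 2 :=
      Finset.sum_nonneg fun k _ => sq_nonneg _
    have hτ : (τ - ζ) ^ 2 = (θ - ζ) ^ 2 + (τ - θ) ^ 2 + 2 * ((θ - ζ) * (τ - θ)) := by
      ring
    nlinarith [sq_nonneg (τ - θ)]

/-- Proposition 2: Closed form of the Euclidean projection of `(y, ζ)`
onto the epigraph of `h(p) = max_k (p k + r k)`.  The sorted values
`ν 1 ≤ … ≤ ν K` (indexed by `1,…,K`) form the nondecreasing rearrangement of
`(y k + r k)_k`.  There is a unique `k̄ ∈ {1,…,K+1}` such that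
`θ = (ζ + ∑_{k=k̄}^K ν k) / (K − k̄ + 2)` satisfies `ν (k̄−1) < θ ≤ ν k̄` (lower
condition vacuous for `k̄ = 1`, upper one for `k̄ = K+1`), and for this `k̄` the
projection equals `(p, θ)` with `p k = min (y k) (θ − r k)`; the projection is
expressed by membership in the epigraph together with minimality of the squared
Euclidean distance on `ℝ^K × ℝ`. -/
theorem projection_onto_epigraph_of_max_closed_form
    (K : ℕ) (hK : 1 ≤ K) (r y : Fin K → ℝ) (ζ : ℝ) (ν : ℕ → ℝ)
    -- `ν 1, …, ν K` is the nondecreasing rearrangement of `(y k + r k)_k`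
    (hmono : ∀ i j, 1 ≤ i → i ≤ j → j ≤ K → ν i ≤ ν j)
    (hperm : ∃ σ : Equiv.Perm (Fin K), ∀ k : Fin K, ν (k.1 + 1) = y (σ k) + r (σ k)) :
    (∃! kbar : ℕ,
        (1 ≤ kbar ∧ kbar ≤ K + 1) ∧
        (2 ≤ kbar →
          ν (kbar - 1) <
            (ζ + ∑ k ∈ Finset.Icc kbar K, ν k) / ((K + 2 - kbar : ℕ) : ℝ)) ∧
        (kbar ≤ K →
          (ζ + ∑ k ∈ Finset.Icc kbar K, ν k) / ((K + 2 - kbar : ℕ) : ℝ) ≤ ν kbar)) ∧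
    ∀ kbar : ℕ, (1 ≤ kbar ∧ kbar ≤ K + 1) →
      (2 ≤ kbar →
        ν (kbar - 1) < (ζ + ∑ k ∈ Finset.Icc kbar K, ν k) / ((K + 2 - kbar : ℕ) : ℝ)) →
      (kbar ≤ K →
        (ζ + ∑ k ∈ Finset.Icc kbar K, ν k) / ((K + 2 - kbar : ℕ) : ℝ) ≤ ν kbar) →
      (let θ : ℝ := (ζ + ∑ k ∈ Finset.Icc kbar K, ν k) / ((K + 2 - kbar : ℕ) : ℝ)
       let p : Fin K → ℝ := fun k => min (y k) (θ - r k)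
       -- `(p, θ)` lies in `epi h` and minimizes the squared distance to `(y, ζ)`
       (⨆ k, (p k + r k)) ≤ θ ∧
       ∀ (q : Fin K → ℝ) (τ : ℝ), (⨆ k, (q k + r k)) ≤ τ →
         (∑ k, (p k - y k) ^ 2) + (θ - ζ) ^ 2 ≤
         (∑ k, (q k - y k) ^ 2) + (τ - ζ) ^ 2) := by
  obtain ⟨σ, hσ⟩ := hperm
  obtain ⟨θs, hθs⟩ := root_exists K hK ν ζ hmono
  obtain ⟨kb, ⟨hkb1, hkb2⟩, hkblo, hkbhi⟩ := kbar_exists K hK ν θs hmono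
  have hform : θs = (ζ + ∑ k ∈ Finset.Icc kb K, ν k) / ((K + 2 - kb : ℕ) : ℝ) :=
    (root_char K ν ζ hmono kb θs hkb1 hkb2 hkblo hkbhi).mpr hθs
  constructor
  · refine ⟨kb, ⟨⟨hkb1, hkb2⟩, ?_, ?_⟩, ?_⟩
    · intro h2; rw [← hform]; exact hkblo h2
    · intro hle; rw [← hform]; exact hkbhi hle
    · rintro k' ⟨⟨h1, h2⟩, hlo, hhi⟩
      have hroot' := (root_char K ν ζ hmono k'
        ((ζ + ∑ k ∈ Finset.Icc k' K, ν k) / ((K + 2 - k' : ℕ) : ℝ)) h1 h2 hlo hhi).mp rfl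
      have hθeq := root_unique K ν ζ hroot' hθs
      refine index_unique K ν θs hmono k' kb h1 h2 hkb1 hkb2 ?_ ?_ hkblo hkbhi
      · intro h; rw [← hθeq]; exact hlo h
      · intro h; rw [← hθeq]; exact hhi h
  · rintro kbar ⟨h1, h2⟩ hlo hhi
    have hroot' := (root_char K ν ζ hmono kbar
      ((ζ + ∑ k ∈ Finset.Icc kbar K, ν k) / ((K + 2 - kbar : ℕ) : ℝ)) h1 h2 hlo hhi).mp rfl
    exact optimality K hK r y ζ _ σ ν hσ hroot'
end

section
/- Let K ≥ 1, r ∈ ℝ^K, and define h : ℝ^K → ℝ by h(y) = max_{1≤k≤K} (y^(k) + r^(k)). Fix (y, ζ) ∈ ℝ^K × ℝ and define φ : ℝ → ℝ by φ(v) = (1/2) ∑_{k=1}^K (max{y^(k) + r^(k) − v, 0})². Then the Euclidean projection of (y, ζ) onto epi h = {(p, θ) : h(p) ≤ θ} equals (p, θ) where θ = prox_φ(ζ) and p^(k) = min{y^(k), θ − r^(k)} for every k ∈ {1,…,K}. -/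
/-- The Euclidean projection of `(y, ζ)` onto the epigraph of
`h(p) = max_k (p k + r k)` equals `(p, θ)` where `θ = prox_φ(ζ)` for
`φ(v) = (1/2) ∑ k, (max {y k + r k − v, 0})²` and `p k = min (y k) (θ − r k)`.
The relation `θ = prox_φ(ζ)` is expressed by `θ` minimizing
`v ↦ (1/2)(v − ζ)² + φ(v)` (its minimizer is unique), and the projection is expressed
by epigraph membership together with minimality of the squared Euclidean distance. -/
theorem projection_onto_epigraph_of_max_via_prox
    (K : ℕ) (hK : 1 ≤ K) (r y : Fin K → ℝ) (ζ θ : ℝ)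
    -- `θ = prox_φ(ζ)`
    (hθ : ∀ v : ℝ,
        (1 / 2) * (θ - ζ) ^ 2 + (1 / 2) * ∑ k, (max (y k + r k - θ) 0) ^ 2 ≤
        (1 / 2) * (v - ζ) ^ 2 + (1 / 2) * ∑ k, (max (y k + r k - v) 0) ^ 2) :
    (let p : Fin K → ℝ := fun k => min (y k) (θ - r k)
     (⨆ k, (p k + r k)) ≤ θ ∧
     ∀ (q : Fin K → ℝ) (τ : ℝ), (⨆ k, (q k + r k)) ≤ τ →
       (∑ k, (p k - y k) ^ 2) + (θ - ζ) ^ 2 ≤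
       (∑ k, (q k - y k) ^ 2) + (τ - ζ) ^ 2) := by
  intro p
  haveI : Nonempty (Fin K) := ⟨⟨0, hK⟩⟩
  constructor
  · apply ciSup_le
    intro k
    have : p k ≤ θ - r k := min_le_right _ _
    linarith
  · intro q τ hq
    have hqk : ∀ k, q k + r k ≤ τ := fun k =>
      le_trans (le_ciSup (Set.Finite.bddAbove (Set.finite_range (fun k => q k + r k))) k) hq
    have h1 : ∀ k, (p k - y k) ^ 2 = (max (y k + r k - θ) 0) ^ 2 := by
      intro k
      rcases le_total (y k) (θ - r k) with h | h
      · have h2 : max (y k + r k - θ) 0 = 0 := max_eq_right (by linarith)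
        simp [p, min_eq_left h, h2]
      · have h2 : max (y k + r k - θ) 0 = y k + r k - θ := max_eq_left (by linarith)
        simp only [p, min_eq_right h, h2]
        ring
    have h2 : ∀ k, (max (y k + r k - τ) 0) ^ 2 ≤ (q k - y k) ^ 2 := by
      intro k
      rcases le_total (y k + r k - τ) 0 with h | h
      · simp [max_eq_right h]
        positivity
      · rw [max_eq_left h]
        have := hqk k
        nlinarith
    calc (∑ k, (p k - y k) ^ 2) + (θ - ζ) ^ 2
        = 2 * ((1 / 2) * (θ - ζ) ^ 2 + (1 / 2) * ∑ k, (max (y k + r k - θ) 0) ^ 2) := by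
          rw [Finset.sum_congr rfl (fun k _ => h1 k)]; ring
      _ ≤ 2 * ((1 / 2) * (τ - ζ) ^ 2 + (1 / 2) * ∑ k, (max (y k + r k - τ) 0) ^ 2) := by
          linarith [hθ τ]
      _ = (∑ k, (max (y k + r k - τ) 0) ^ 2) + (τ - ζ) ^ 2 := by ring
      _ ≤ (∑ k, (q k - y k) ^ 2) + (τ - ζ) ^ 2 := by
          have := Finset.sum_le_sum (s := Finset.univ) (fun k _ => h2 k)
          linarith [this]
end

section
/- Let K ≥ 1, let ν = (ν^(1),…,ν^(K)) ∈ ℝ^K be nondecreasing, and let ζ ∈ ℝ. Then there exists exactly one integer k̄ ∈ {1,…,K+1} such that the number θ := (ζ + ∑_{k=k̄}^{K} ν^(k)) / (K − k̄ + 2) satisfies ν^(k̄−1) < θ ≤ ν^(k̄), where the lower condition is vacuous for k̄ = 1, the upper condition is vacuous for k̄ = K+1, and ∑_{k=K+1}^{K} denotes the empty sum. Moreover, for this k̄ the resulting θ satisfies θ − ∑_{k=1}^K max{ν^(k) − θ, 0} = ζ. -/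
noncomputable def brT (K : ℕ) (ν : ℕ → ℝ) (ζ : ℝ) (k : ℕ) : ℝ :=
  (ζ + ∑ j ∈ Finset.Icc k K, ν j) / ((K + 2 - k : ℕ) : ℝ)

def brGood (K : ℕ) (ν : ℕ → ℝ) (ζ : ℝ) (k : ℕ) : Prop :=
  (1 ≤ k ∧ k ≤ K + 1) ∧ (2 ≤ k → ν (k - 1) < brT K ν ζ k) ∧ (k ≤ K → brT K ν ζ k ≤ ν k)

lemma br_fmono (K : ℕ) (ν : ℕ → ℝ) {a b : ℝ} (hab : a < b) :
    a - ∑ k ∈ Finset.Icc 1 K, max (ν k - a) 0 <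
      b - ∑ k ∈ Finset.Icc 1 K, max (ν k - b) 0 := by
  have h : ∑ k ∈ Finset.Icc 1 K, max (ν k - b) 0 ≤ ∑ k ∈ Finset.Icc 1 K, max (ν k - a) 0 :=
    Finset.sum_le_sum fun i _ => max_le_max (by linarith) le_rfl
  linarith

lemma br_root (K k : ℕ) (ν : ℕ → ℝ) (ζ : ℝ)
    (hmono : ∀ i j, 1 ≤ i → i ≤ j → j ≤ K → ν i ≤ ν j)
    (hk1 : 1 ≤ k) (hk2 : k ≤ K + 1)
    (hlow : 2 ≤ k → ν (k - 1) < brT K ν ζ k)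
    (hup : k ≤ K → brT K ν ζ k ≤ ν k) :
    brT K ν ζ k - ∑ j ∈ Finset.Icc 1 K, max (ν j - brT K ν ζ k) 0 = ζ := by
  set θ := brT K ν ζ k with hθ
  have hsum : ∑ j ∈ Finset.Icc 1 K, max (ν j - θ) 0 = ∑ j ∈ Finset.Icc k K, (ν j - θ) := by
    have hcong : ∀ j ∈ Finset.Icc 1 K, max (ν j - θ) 0 = if k ≤ j then ν j - θ else 0 := by
      intro j hj
      simp only [Finset.mem_Icc] at hj
      by_cases hkj : k ≤ j
      · have h1 : θ ≤ ν k := hup (le_trans hkj hj.2)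
        have h2 : ν k ≤ ν j := hmono k j hk1 hkj hj.2
        simp [hkj, max_eq_left (by linarith : (0:ℝ) ≤ ν j - θ)]
      · have hk2' : 2 ≤ k := by omega
        have h1 : ν j ≤ ν (k - 1) := hmono j (k - 1) hj.1 (by omega) (by omega)
        have h2 : ν (k - 1) < θ := hlow hk2'
        simp [hkj, max_eq_right (by linarith : ν j - θ ≤ (0:ℝ))]
    rw [Finset.sum_congr rfl hcong, ← Finset.sum_filter]
    congr 1
    ext x
    simp only [Finset.mem_filter, Finset.mem_Icc]
    omega
  rw [hsum, Finset.sum_sub_distrib, Finset.sum_const, Nat.card_Icc, nsmul_eq_mul]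
  have hcast : ((K + 1 - k : ℕ) : ℝ) + 1 = ((K + 2 - k : ℕ) : ℝ) := by
    have : (K + 1 - k) + 1 = K + 2 - k := by omega
    exact_mod_cast congrArg (Nat.cast (R := ℝ)) this
  have hden : (0:ℝ) < ((K + 2 - k : ℕ) : ℝ) := by
    have : 1 ≤ K + 2 - k := by omega
    exact_mod_cast Nat.lt_of_lt_of_le Nat.zero_lt_one this
  have hθeq : θ * ((K + 2 - k : ℕ) : ℝ) = ζ + ∑ j ∈ Finset.Icc k K, ν j := by
    rw [hθ, brT, div_mul_cancel₀ _ (ne_of_gt hden)]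
  rw [← hcast] at hθeq
  linear_combination hθeq

lemma br_step (K k : ℕ) (ν : ℕ → ℝ) (ζ : ℝ) (hk1 : 1 ≤ k) (hk2 : k ≤ K)
    (h : ν k < brT K ν ζ k) : ν k < brT K ν ζ (k + 1) := by
  have hsplit : ∑ j ∈ Finset.Icc k K, ν j = ν k + ∑ j ∈ Finset.Icc (k + 1) K, ν j := by
    have hins : Finset.Icc k K = insert k (Finset.Icc (k + 1) K) := by
      ext x; simp only [Finset.mem_Icc, Finset.mem_insert]; omega
    rw [hins, Finset.sum_insert (by simp)]
  set dn : ℕ := K + 1 - k with hdn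
  have e1 : K + 2 - k = dn + 1 := by omega
  have e2 : K + 2 - (k + 1) = dn := by omega
  have hd : (1:ℝ) ≤ (dn : ℝ) := by exact_mod_cast (by omega : 1 ≤ dn)
  rw [brT, e1] at h
  rw [brT, e2]
  rw [lt_div_iff₀ (by positivity)] at h ⊢
  push_cast at h ⊢
  rw [hsplit] at h
  nlinarith

lemma br_uniq (K : ℕ) (hK : 1 ≤ K) (ν : ℕ → ℝ)
    (hmono : ∀ i j, 1 ≤ i → i ≤ j → j ≤ K → ν i ≤ ν j) (ζ : ℝ) :
    ∀ a b : ℕ, brGood K ν ζ a → brGood K ν ζ b → a = b := by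
  have key : ∀ a b : ℕ, brGood K ν ζ a → brGood K ν ζ b → a < b → False := by
    intro a b ha hb hab
    obtain ⟨⟨ha1, ha2⟩, halow, haup⟩ := ha
    obtain ⟨⟨hb1, hb2⟩, hblow, hbup⟩ := hb
    have h1 : brT K ν ζ a ≤ ν a := haup (by omega)
    have h2 : ν a ≤ ν (b - 1) := hmono a (b - 1) ha1 (by omega) (by omega)
    have h3 : ν (b - 1) < brT K ν ζ b := hblow (by omega)
    have h4 : brT K ν ζ a < brT K ν ζ b := by linarith
    have r1 := br_root K a ν ζ hmono ha1 ha2 halow haup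
    have r2 := br_root K b ν ζ hmono hb1 hb2 hblow hbup
    have := br_fmono K ν h4
    linarith
  intro a b ha hb
  rcases lt_trichotomy a b with h | h | h
  · exact absurd (key a b ha hb h) (fun x => x)
  · exact h
  · exact absurd (key b a hb ha h) (fun x => x)

lemma br_exists (K : ℕ) (hK : 1 ≤ K) (ν : ℕ → ℝ)
    (hmono : ∀ i j, 1 ≤ i → i ≤ j → j ≤ K → ν i ≤ ν j) (ζ : ℝ) :
    ∃ k : ℕ, brGood K ν ζ k := by
  classical
  by_cases hex : ∃ k : ℕ, 1 ≤ k ∧ k ≤ K ∧ brT K ν ζ k ≤ ν k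
  · set kb := Nat.find hex with hkb
    obtain ⟨h1, h2, h3⟩ := Nat.find_spec hex
    refine ⟨kb, ⟨h1, by omega⟩, ?_, fun _ => h3⟩
    intro hk2
    have hnot := Nat.find_min hex (m := kb - 1) (by omega)
    push_neg at hnot
    have hlt : ν (kb - 1) < brT K ν ζ (kb - 1) := hnot (by omega) (by omega)
    have := br_step K (kb - 1) ν ζ (by omega) (by omega) hlt
    rwa [show kb - 1 + 1 = kb by omega] at this
  · push_neg at hex
    refine ⟨K + 1, ⟨by omega, le_refl _⟩, ?_, by omega⟩
    intro _
    have hlt : ν K < brT K ν ζ K := hex K hK le_rfl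
    have := br_step K K ν ζ hK le_rfl hlt
    simpa using this

/-- Combinatorial step of the closed-form epigraphical projection.
Given a nondecreasing tuple `ν 1 ≤ … ≤ ν K` (indexed by `1,…,K`) and `ζ ∈ ℝ`, there
is exactly one `k̄ ∈ {1,…,K+1}` such that `θ = (ζ + ∑_{k=k̄}^K ν k) / (K − k̄ + 2)`
satisfies `ν (k̄−1) < θ ≤ ν k̄` (lower condition vacuous for `k̄ = 1`, upper one for
`k̄ = K+1`); moreover, for this `k̄` the resulting `θ` satisfies
`θ − ∑_{k=1}^K max {ν k − θ, 0} = ζ`. -/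
theorem unique_breakpoint_index_and_root
    (K : ℕ) (hK : 1 ≤ K) (ν : ℕ → ℝ)
    (hmono : ∀ i j, 1 ≤ i → i ≤ j → j ≤ K → ν i ≤ ν j) (ζ : ℝ) :
    (∃! kbar : ℕ,
        (1 ≤ kbar ∧ kbar ≤ K + 1) ∧
        (2 ≤ kbar →
          ν (kbar - 1) <
            (ζ + ∑ k ∈ Finset.Icc kbar K, ν k) / ((K + 2 - kbar : ℕ) : ℝ)) ∧
        (kbar ≤ K →
          (ζ + ∑ k ∈ Finset.Icc kbar K, ν k) / ((K + 2 - kbar : ℕ) : ℝ) ≤ ν kbar)) ∧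
    ∀ kbar : ℕ, (1 ≤ kbar ∧ kbar ≤ K + 1) →
      (2 ≤ kbar →
        ν (kbar - 1) < (ζ + ∑ k ∈ Finset.Icc kbar K, ν k) / ((K + 2 - kbar : ℕ) : ℝ)) →
      (kbar ≤ K →
        (ζ + ∑ k ∈ Finset.Icc kbar K, ν k) / ((K + 2 - kbar : ℕ) : ℝ) ≤ ν kbar) →
      (let θ : ℝ := (ζ + ∑ k ∈ Finset.Icc kbar K, ν k) / ((K + 2 - kbar : ℕ) : ℝ)
       θ - ∑ k ∈ Finset.Icc 1 K, max (ν k - θ) 0 = ζ) := by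
  constructor
  · obtain ⟨k, hk⟩ := br_exists K hK ν hmono ζ
    exact ⟨k, hk, fun y hy => br_uniq K hK ν hmono ζ y k hy hk⟩
  · intro kbar h1 h2 h3
    exact br_root K kbar ν ζ hmono h1.1 h1.2 h2 h3
end
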